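/- If a convex open domain D in an affine chart of the projective sphere Sⁿ is not properly convex (i.e., its closure contains a pair of antipodal points), then D contains a complete affine line. -/
import Mathlib


/-- A convex open domain `D` in an affine chart of the projective
sphere `Sⁿ` which is not properly convex contains a complete affine line.

We model a convex domain in `Sⁿ` by the open convex cone `C ⊆ ℝ^{n+1}` over it.
The condition that `D` lies in an affine chart is that some linear functional
`f` is positive on `C`.  Failure of proper convexity means that the closure of
`D` contains an antipodal pair, i.e. there is `v ≠ 0` with both `v` and `-v` in
the closure of `C`.  A complete affine line in `D` corresponds to a full
affine line `t ↦ p + t • v` contained in `C` (it lies in the affine chart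
since `f v = 0`). -/
theorem not_properly_convex_contains_complete_affine_line
    {n : ℕ} (C : Set (EuclideanSpace ℝ (Fin (n + 1))))
    (hopen : IsOpen C) (hconv : Convex ℝ C)
    (hcone : ∀ x ∈ C, ∀ t : ℝ, 0 < t → t • x ∈ C)
    (f : EuclideanSpace ℝ (Fin (n + 1)) →ₗ[ℝ] ℝ)
    (hchart : ∀ x ∈ C, 0 < f x)
    (v : EuclideanSpace ℝ (Fin (n + 1))) (hv : v ≠ 0)
    (hvc : v ∈ closure C) (hvc' : -v ∈ closure C) :
    ∃ p ∈ C, ∀ t : ℝ, p + t • v ∈ C := by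
  have key : ∀ p ∈ C, ∀ w ∈ closure C, ∀ s : ℝ, 0 ≤ s → p + s • w ∈ C := by
    intro p hp w hw s hs
    rcases eq_or_lt_of_le hs with rfl | hs
    · simpa using hp
    · have h1s : (0:ℝ) < 1 + s := by linarith
      have ha : (0:ℝ) < 1 / (1 + s) := by positivity
      have hb : (0:ℝ) ≤ s / (1 + s) := by positivity
      have hab : 1 / (1 + s) + s / (1 + s) = 1 := by field_simp
      have hx : (1 / (1 + s)) • p + (s / (1 + s)) • w ∈ interior C := by
        apply hconv.combo_interior_closure_mem_interior _ hw ha hb hab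
        rwa [hopen.interior_eq]
      rw [hopen.interior_eq] at hx
      have := hcone _ hx (1 + s) h1s
      rw [smul_add, smul_smul, smul_smul] at this
      have e1 : (1 + s) * (1 / (1 + s)) = 1 := by field_simp
      have e2 : (1 + s) * (s / (1 + s)) = s := by field_simp
      rwa [e1, e2, one_smul] at this
  obtain ⟨p, hp⟩ : C.Nonempty := by
    rw [← closure_nonempty_iff]; exact ⟨v, hvc⟩
  refine ⟨p, hp, fun t => ?_⟩
  rcases le_or_gt 0 t with ht | ht
  · exact key p hp v hvc t ht
  · have : p + t • v = p + (-t) • (-v) := by simp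
    rw [this]
    exact key p hp (-v) hvc' (-t) (by linarith)
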